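/- Let X, X̄ ∈ ℝ^{q×K} be matrices, R ∈ ℝ^{K×K} orthogonal, and suppose every row of X has Euclidean norm at least c₀ q^{−1/2} for some constant c₀ > 0, and that ‖X̄ − XR‖_F ≤ (c₀/2) q^{−1/2}. Let X* and X̄* denote the row-normalized versions (each row divided by its Euclidean norm). Then ‖X̄* − X*R‖_F ≤ (2/c₀) q^{1/2} ‖X̄ − XR‖_F. -/

import Mathlib

open Matrix

/-- Euclidean norm of a (row) vector in `ℝ^K`. -/
noncomputable def rowNorm {K : ℕ} (v : Fin K → ℝ) : ℝ := Real.sqrt (∑ j, v j ^ 2)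

/-- Frobenius norm of a matrix. -/
noncomputable def frobNorm {m n : ℕ} (M : Matrix (Fin m) (Fin n) ℝ) : ℝ :=
  Real.sqrt (∑ i, ∑ j, M i j ^ 2)

/-- Row-normalization of a matrix: each row is divided by its Euclidean norm. -/
noncomputable def rowNormalize {m n : ℕ} (M : Matrix (Fin m) (Fin n) ℝ) :
    Matrix (Fin m) (Fin n) ℝ := fun i j => M i j / rowNorm (M i)

noncomputable def toE {K : ℕ} (v : Fin K → ℝ) : EuclideanSpace ℝ (Fin K) :=
  (EuclideanSpace.equiv (Fin K) ℝ).symm v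

lemma rowNorm_eq_norm {K : ℕ} (v : Fin K → ℝ) : rowNorm v = ‖toE v‖ := by
  rw [EuclideanSpace.norm_eq]
  simp [rowNorm, toE, Real.norm_eq_abs, sq_abs]

lemma toE_sub {K : ℕ} (u v : Fin K → ℝ) : toE (u - v) = toE u - toE v := rfl

lemma toE_smul {K : ℕ} (c : ℝ) (v : Fin K → ℝ) : toE (c • v) = c • toE v := rfl

lemma rowNorm_nonneg {K : ℕ} (v : Fin K → ℝ) : 0 ≤ rowNorm v := Real.sqrt_nonneg _

lemma normalize_sub_le {E : Type*} [NormedAddCommGroup E] [NormedSpace ℝ E]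
    (x y : E) (hx : x ≠ 0) (hy : y ≠ 0) :
    ‖‖x‖⁻¹ • x - ‖y‖⁻¹ • y‖ ≤ 2 * ‖x - y‖ / ‖y‖ := by
  have hxn : (0:ℝ) < ‖x‖ := norm_pos_iff.mpr hx
  have hyn : (0:ℝ) < ‖y‖ := norm_pos_iff.mpr hy
  have key : ‖x‖⁻¹ • x - ‖y‖⁻¹ • y = ‖y‖⁻¹ • (x - y) + (‖x‖⁻¹ - ‖y‖⁻¹) • x := by
    rw [smul_sub, sub_smul]; abel
  rw [key]
  calc ‖‖y‖⁻¹ • (x - y) + (‖x‖⁻¹ - ‖y‖⁻¹) • x‖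
      ≤ ‖‖y‖⁻¹ • (x - y)‖ + ‖(‖x‖⁻¹ - ‖y‖⁻¹) • x‖ := norm_add_le _ _
    _ = ‖y‖⁻¹ * ‖x - y‖ + |‖x‖⁻¹ - ‖y‖⁻¹| * ‖x‖ := by
        rw [norm_smul, norm_smul, Real.norm_eq_abs, Real.norm_eq_abs,
          abs_of_pos (inv_pos.mpr hyn)]
    _ ≤ ‖y‖⁻¹ * ‖x - y‖ + (‖x - y‖ / (‖x‖ * ‖y‖)) * ‖x‖ := by
        gcongr
        have h1 : ‖x‖⁻¹ - ‖y‖⁻¹ = (‖y‖ - ‖x‖) / (‖x‖ * ‖y‖) := by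
          field_simp
        rw [h1, abs_div, abs_of_pos (mul_pos hxn hyn)]
        gcongr
        calc |‖y‖ - ‖x‖| = |‖x‖ - ‖y‖| := abs_sub_comm _ _
          _ ≤ ‖x - y‖ := abs_norm_sub_norm_le x y
    _ = 2 * ‖x - y‖ / ‖y‖ := by field_simp; ring

lemma rowNorm_mul_orth {q K : ℕ} (X : Matrix (Fin q) (Fin K) ℝ)
    (R : Matrix (Fin K) (Fin K) ℝ) (hR : Rᵀ * R = 1) (i : Fin q) :
    rowNorm ((X * R) i) = rowNorm (X i) := by
  have hRR : R * Rᵀ = 1 := mul_eq_one_comm.mp hR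
  have h1 : X * R * (X * R)ᵀ = X * Xᵀ := by
    rw [Matrix.transpose_mul, Matrix.mul_assoc, ← Matrix.mul_assoc R, hRR, Matrix.one_mul]
  unfold rowNorm
  congr 1
  have h2 : ∑ j, ((X * R) i j) ^ 2 = (X * R * (X * R)ᵀ) i i := by
    simp [Matrix.mul_apply, Matrix.transpose_apply, sq, mul_comm]
  have h3 : ∑ j, (X i j) ^ 2 = (X * Xᵀ) i i := by
    simp [Matrix.mul_apply, Matrix.transpose_apply, sq, mul_comm]
  rw [h2, h3, h1]

lemma rowNormalize_mul {q K : ℕ} (X : Matrix (Fin q) (Fin K) ℝ)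
    (R : Matrix (Fin K) (Fin K) ℝ) (hR : Rᵀ * R = 1) :
    rowNormalize X * R = rowNormalize (X * R) := by
  ext i j
  simp only [rowNormalize, Matrix.mul_apply]
  rw [rowNorm_mul_orth X R hR, Finset.sum_div]
  exact Finset.sum_congr rfl fun k _ => div_mul_eq_mul_div _ _ _

lemma rowNorm_le_frobNorm {m n : ℕ} (M : Matrix (Fin m) (Fin n) ℝ) (i : Fin m) :
    rowNorm (M i) ≤ frobNorm M := by
  apply Real.sqrt_le_sqrt
  exact Finset.single_le_sum (f := fun i => ∑ j, M i j ^ 2)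
    (fun j _ => Finset.sum_nonneg fun k _ => sq_nonneg _) (Finset.mem_univ i)

lemma frobNorm_eq_rows {m n : ℕ} (M : Matrix (Fin m) (Fin n) ℝ) :
    frobNorm M = Real.sqrt (∑ i, rowNorm (M i) ^ 2) := by
  unfold frobNorm rowNorm
  congr 1
  exact Finset.sum_congr rfl fun i _ =>
    (Real.sq_sqrt (Finset.sum_nonneg fun j _ => sq_nonneg _)).symm

/-- If every row of `X` has norm at least `c₀ q^{-1/2}`, `R` is orthogonal, and
`‖X̄ − XR‖_F ≤ (c₀/2) q^{-1/2}`, then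
`‖X̄* − X*R‖_F ≤ (2/c₀) q^{1/2} ‖X̄ − XR‖_F`, where `*` denotes row normalization. -/
theorem rowNormalized_perturbation {q K : ℕ}
    (X Xbar : Matrix (Fin q) (Fin K) ℝ) (R : Matrix (Fin K) (Fin K) ℝ)
    (c₀ : ℝ) (hc₀ : 0 < c₀) (hR : Rᵀ * R = 1)
    (hrow : ∀ i, c₀ / Real.sqrt q ≤ rowNorm (X i))
    (hpert : frobNorm (Xbar - X * R) ≤ (c₀ / 2) / Real.sqrt q) :
    frobNorm (rowNormalize Xbar - rowNormalize X * R)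
      ≤ (2 / c₀) * Real.sqrt q * frobNorm (Xbar - X * R) := by
  set Y := X * R with hY
  rw [rowNormalize_mul X R hR, ← hY]
  rcases Nat.eq_zero_or_pos q with hq | hq
  · subst hq
    simp [frobNorm]
  set C : ℝ := (2 / c₀) * Real.sqrt q with hC
  have hsq : (0:ℝ) < Real.sqrt q := Real.sqrt_pos.mpr (by exact_mod_cast hq)
  have hCpos : 0 < C := by positivity
  set r : ℝ := c₀ / Real.sqrt q with hr
  have hrpos : 0 < r := by positivity
  have hrowY : ∀ i, r ≤ rowNorm (Y i) := fun i => by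
    rw [hY, rowNorm_mul_orth X R hR]; exact hrow i
  -- per row bound
  have hrowbound : ∀ i, rowNorm ((rowNormalize Xbar - rowNormalize Y) i)
      ≤ C * rowNorm ((Xbar - Y) i) := by
    intro i
    have hrsub : (Xbar - Y) i = Xbar i - Y i := rfl
    have hdle : rowNorm ((Xbar - Y) i) ≤ r / 2 := by
      calc rowNorm ((Xbar - Y) i) ≤ frobNorm (Xbar - Y) := rowNorm_le_frobNorm _ i
        _ ≤ c₀ / 2 / Real.sqrt q := hpert
        _ = r / 2 := by rw [hr]; ring
    have hxb : r / 2 ≤ rowNorm (Xbar i) := by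
      have h1 : |rowNorm (Y i) - rowNorm (Xbar i)| ≤ rowNorm ((Xbar - Y) i) := by
        rw [hrsub, rowNorm_eq_norm, rowNorm_eq_norm, rowNorm_eq_norm, toE_sub,
          abs_sub_comm]
        exact abs_norm_sub_norm_le _ _
      have h2 : rowNorm (Y i) - rowNorm (Xbar i) ≤ r / 2 :=
        (le_abs_self _).trans (h1.trans hdle)
      have := hrowY i
      linarith
    have hxbpos : 0 < rowNorm (Xbar i) := lt_of_lt_of_le (by positivity) hxb
    have hypos : 0 < rowNorm (Y i) := lt_of_lt_of_le hrpos (hrowY i)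
    have hxne : toE (Xbar i) ≠ 0 := by
      rw [rowNorm_eq_norm] at hxbpos; exact norm_pos_iff.mp hxbpos
    have hyne : toE (Y i) ≠ 0 := by
      rw [rowNorm_eq_norm] at hypos; exact norm_pos_iff.mp hypos
    have hrowfun : (rowNormalize Xbar - rowNormalize Y) i =
        (rowNorm (Xbar i))⁻¹ • (Xbar i) - (rowNorm (Y i))⁻¹ • (Y i) := by
      funext j
      simp [rowNormalize, div_eq_inv_mul]
    rw [hrowfun, rowNorm_eq_norm, toE_sub, toE_smul, toE_smul,
      rowNorm_eq_norm (Xbar i), rowNorm_eq_norm (Y i)]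
    calc ‖‖toE (Xbar i)‖⁻¹ • toE (Xbar i) - ‖toE (Y i)‖⁻¹ • toE (Y i)‖
        ≤ 2 * ‖toE (Xbar i) - toE (Y i)‖ / ‖toE (Y i)‖ :=
          normalize_sub_le _ _ hxne hyne
      _ ≤ 2 * ‖toE (Xbar i) - toE (Y i)‖ / r := by
          gcongr <;>
            first
              | exact hrpos
              | (rw [← rowNorm_eq_norm]; exact hrowY i)
      _ = C * rowNorm ((Xbar - Y) i) := by
          rw [hrsub, rowNorm_eq_norm, toE_sub, hC, hr]
          field_simp
  -- sum up
  rw [frobNorm_eq_rows (rowNormalize Xbar - rowNormalize Y), frobNorm_eq_rows (Xbar - Y)]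
  have hsum : ∑ i, rowNorm ((rowNormalize Xbar - rowNormalize Y) i) ^ 2
      ≤ C ^ 2 * ∑ i, rowNorm ((Xbar - Y) i) ^ 2 := by
    rw [Finset.mul_sum]
    apply Finset.sum_le_sum
    intro i _
    rw [← mul_pow]
    exact pow_le_pow_left₀ (rowNorm_nonneg _) (hrowbound i) 2
  calc Real.sqrt (∑ i, rowNorm ((rowNormalize Xbar - rowNormalize Y) i) ^ 2)
      ≤ Real.sqrt (C ^ 2 * ∑ i, rowNorm ((Xbar - Y) i) ^ 2) := Real.sqrt_le_sqrt hsum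
    _ = C * Real.sqrt (∑ i, rowNorm ((Xbar - Y) i) ^ 2) := by
        rw [Real.sqrt_mul (sq_nonneg C), Real.sqrt_sq hCpos.le]
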